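/- Let A be a bounded linear operator on a Banach space B, and suppose there exist a Banach space B' with a compact embedding B ↪ B', constants ρ > 0, and for each n ≥ 1 constants C₁ and C(n) such that ‖A^n f‖_B ≤ C₁ ρ^n ‖f‖_B + C(n) ‖f‖_{B'} for all f ∈ B. Then the essential spectral radius of A on B is at most ρ. -/

import Mathlib

set_option maxHeartbeats 1000000


/-- The essential norm of a bounded operator: its distance to the compact
operators (the norm of its image in the Calkin algebra). -/
noncomputable def essNorm {B : Type*} [NormedAddCommGroup B] [NormedSpace ℝ B]
    (A : B →L[ℝ] B) : ℝ :=
  sInf {r : ℝ | ∃ K : B →L[ℝ] B, IsCompactOperator K ∧ r = ‖A - K‖}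

/-- The essential spectral radius, via Nussbaum's formula:
ρ_ess(A) = lim_n (essNorm(Aⁿ))^{1/n} = inf_{n ≥ 1} (essNorm(Aⁿ))^{1/n}. -/
noncomputable def essSpectralRadius {B : Type*} [NormedAddCommGroup B]
    [NormedSpace ℝ B] (A : B →L[ℝ] B) : ℝ :=
  sInf {r : ℝ | ∃ n : ℕ, 0 < n ∧ r = essNorm (A ^ n) ^ (1 / (n : ℝ))}


open Metric Set Module Filter

section HennionAux

variable {B B' : Type*} [NormedAddCommGroup B] [NormedSpace ℝ B]
  [NormedAddCommGroup B'] [NormedSpace ℝ B']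

lemma isCompactOperator_smulRight (c : B →L[ℝ] ℝ) (y : B') :
    IsCompactOperator (c.smulRight y) := by
  refine ⟨(fun t : ℝ => t • y) '' (Metric.closedBall 0 (‖c‖ + 1)), ?_, ?_⟩
  · exact (isCompact_closedBall 0 _).image (by continuity)
  · refine Filter.mem_of_superset (Metric.ball_mem_nhds 0 one_pos) ?_
    intro x hx
    refine ⟨c x, ?_, rfl⟩
    rw [Metric.mem_closedBall, dist_zero_right]
    calc ‖c x‖ ≤ ‖c‖ * ‖x‖ := c.le_opNorm x
    _ ≤ ‖c‖ * 1 := by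
        have := (mem_ball_zero_iff.mp hx).le
        nlinarith [norm_nonneg c]
    _ ≤ ‖c‖ + 1 := by linarith [norm_nonneg c]

lemma exists_finset_functionals (ι : B →L[ℝ] B') (hcomp : IsCompactOperator ι)
    {ε : ℝ} (hε : 0 < ε) :
    ∃ s : Finset (B →L[ℝ] ℝ), ∀ f : B, (∀ g ∈ s, g f = 0) → ‖ι f‖ ≤ ε * ‖f‖ := by
  obtain ⟨K, hK, hK2⟩ := hcomp.image_closedBall_subset_compact 1
  obtain ⟨t, htfin, htcov⟩ := (Metric.totallyBounded_iff.mp hK.totallyBounded (ε/3) (by linarith))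
  classical
  set gfun : B' → (B →L[ℝ] ℝ) := fun y =>
    if h : y = (0 : B') then 0 else ((exists_dual_vector ℝ y (norm_ne_zero_iff.mpr h)).choose).comp ι with hgfun
  refine ⟨htfin.toFinset.image gfun, ?_⟩
  -- first prove for unit vectors
  have key : ∀ f : B, ‖f‖ ≤ 1 → (∀ y ∈ t, gfun y f = 0) → ‖ι f‖ ≤ ε := by
    intro f hf h0
    have hmem : ι f ∈ K := hK2 ⟨f, by simpa [Metric.mem_closedBall, dist_zero_right] using hf, rfl⟩
    obtain ⟨y, hyt, hy⟩ := Set.mem_iUnion₂.mp (htcov hmem)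
    have hdist : ‖ι f - y‖ < ε / 3 := by
      rw [Metric.mem_ball] at hy
      simpa [dist_eq_norm] using hy
    by_cases hy0 : y = 0
    · subst hy0; simp at hdist; linarith
    · obtain ⟨hψn, hψy⟩ := (exists_dual_vector ℝ y (norm_ne_zero_iff.mpr hy0)).choose_spec
      set ψ := (exists_dual_vector ℝ y (norm_ne_zero_iff.mpr hy0)).choose
      have hz : ψ (ι f) = 0 := by
        have := h0 y hyt
        rw [hgfun] at this
        simpa [hy0] using this
      have heq : ‖y‖ = ψ (y - ι f) := by
        rw [map_sub, hz, sub_zero, hψy]; norm_num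
      have hyn : ‖y‖ ≤ ε / 3 := by
        rw [heq]
        calc ψ (y - ι f) ≤ ‖ψ (y - ι f)‖ := le_abs_self _
        _ ≤ ‖ψ‖ * ‖y - ι f‖ := ψ.le_opNorm _
        _ = ‖ι f - y‖ := by rw [hψn, one_mul, norm_sub_rev]
        _ ≤ ε / 3 := hdist.le
      calc ‖ι f‖ = ‖(ι f - y) + y‖ := by rw [sub_add_cancel]
      _ ≤ ‖ι f - y‖ + ‖y‖ := norm_add_le _ _
      _ ≤ ε/3 + ε/3 := add_le_add hdist.le hyn
      _ ≤ ε := by linarith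
  intro f hf
  have hf' : ∀ y ∈ t, gfun y f = 0 := by
    intro y hy
    exact hf _ (Finset.mem_image_of_mem gfun (htfin.mem_toFinset.mpr hy))
  rcases eq_or_ne f 0 with rfl | hne
  · simp
  · have hnorm : 0 < ‖f‖ := norm_pos_iff.mpr hne
    have hcond : ∀ y ∈ t, (gfun y) (‖f‖⁻¹ • f) = 0 := by
      intro y hy
      rw [map_smul, hf' y hy, smul_zero]
    have hn1 : ‖(‖f‖⁻¹ • f)‖ ≤ 1 := by
      rw [norm_smul, norm_inv, norm_norm, inv_mul_cancel₀ hnorm.ne']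
    have := key (‖f‖⁻¹ • f) hn1 hcond
    rw [map_smul, norm_smul, norm_inv, norm_norm] at this
    have h2 : ‖ι f‖ = ‖f‖ * (‖f‖⁻¹ * ‖ι f‖) := by
      field_simp
    rw [h2, mul_comm (ε) (‖f‖)]
    exact mul_le_mul_of_nonneg_left this hnorm.le

lemma exists_compact_projection {V : Type*} [NormedAddCommGroup V] [NormedSpace ℝ V]
    [FiniteDimensional ℝ V] (Ψ : B →L[ℝ] V) (hsurj : ∀ u : V, ∃ x : B, Ψ x = u) :
    ∃ π : B →L[ℝ] B, IsCompactOperator ⇑π ∧ (∀ f : B, Ψ (π f) = Ψ f) ∧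
      ∀ f : B, ‖π f‖ ≤ (2 * finrank ℝ V) * ‖f‖ := by
  classical
  rcases Nat.eq_zero_or_pos (finrank ℝ V) with hd0 | hdpos
  · haveI : Subsingleton V := finrank_zero_iff.mp hd0
    refine ⟨0, ?_, fun f => Subsingleton.elim _ _, fun f => by simp; positivity⟩
    simpa using (isCompactOperator_zero (M₁ := B) (M₂ := B))
  · set d : ℕ := finrank ℝ V with hd
    haveI : Nonempty (Fin d) := ⟨⟨0, hdpos⟩⟩
    have e : Basis (Fin d) ℝ V := finBasis ℝ V
    set D := e.det with hDdef
    set CL : V →L[ℝ] (Fin d → ℝ) :=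
      LinearMap.toContinuousLinearMap (e.equivFun : V →ₗ[ℝ] (Fin d → ℝ)) with hCL
    have hrepr_bound : ∀ (u : V) (i : Fin d), |e.repr u i| ≤ ‖CL‖ * ‖u‖ := by
      intro u i
      have h1 : CL u i = e.repr u i := by simp [hCL, Basis.equivFun_apply]
      calc |e.repr u i| = ‖CL u i‖ := by rw [h1]; rfl
      _ ≤ ‖CL u‖ := norm_le_pi_norm (CL u) i
      _ ≤ ‖CL‖ * ‖u‖ := CL.le_opNorm u
    set P : Set (Fin d → V) := {w | ∀ i, ∃ v : B, ‖v‖ ≤ 1 ∧ Ψ v = w i} with hP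
    set Sset : Set ℝ := (fun w => |D w|) '' P with hSset
    have hwnorm : ∀ w ∈ P, ∀ i, ‖w i‖ ≤ ‖Ψ‖ := by
      intro w hw i
      obtain ⟨v, hv1, hv2⟩ := hw i
      rw [← hv2]
      calc ‖Ψ v‖ ≤ ‖Ψ‖ * ‖v‖ := Ψ.le_opNorm v
      _ ≤ ‖Ψ‖ * 1 := mul_le_mul_of_nonneg_left hv1 (norm_nonneg _)
      _ = ‖Ψ‖ := mul_one _
    have hbdd : BddAbove Sset := by
      refine ⟨(d.factorial : ℝ) * (‖CL‖ * ‖Ψ‖) ^ d, ?_⟩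
      rintro - ⟨w, hw, rfl⟩
      have hx : ∀ i j, |e.toMatrix w i j| ≤ ‖CL‖ * ‖Ψ‖ := by
        intro i j
        rw [Basis.toMatrix_apply]
        calc |e.repr (w j) i| ≤ ‖CL‖ * ‖w j‖ := hrepr_bound _ _
        _ ≤ ‖CL‖ * ‖Ψ‖ :=
            mul_le_mul_of_nonneg_left (hwnorm w hw j) (norm_nonneg CL)
      have hdet := Matrix.det_le (abv := (AbsoluteValue.abs : AbsoluteValue ℝ ℝ)) hx
      show |e.det w| ≤ _
      rw [Basis.det_apply]
      simpa [nsmul_eq_mul] using hdet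
    -- a positive element of Sset
    have hchoice : ∀ i : Fin d, ∃ x : B, Ψ x = e i := fun i => hsurj (e i)
    choose x hx using hchoice
    set t : Fin d → ℝ := fun i => (1 + ‖x i‖)⁻¹ with ht
    have htpos : ∀ i, 0 < t i := fun i => by rw [ht]; positivity
    have hw0P : (fun i => Ψ (t i • x i)) ∈ P := by
      intro i
      refine ⟨t i • x i, ?_, rfl⟩
      rw [norm_smul, Real.norm_eq_abs, abs_of_pos (htpos i)]
      simp only [ht]
      rw [inv_mul_le_iff₀ (by positivity)]
      nlinarith [norm_nonneg (x i)]
    have hDw0 : |D (fun i => Ψ (t i • x i))| = ∏ i, t i := by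
      have hval : (fun i => Ψ (t i • x i)) = fun i => t i • e i := by
        funext i; rw [map_smul, hx i]
      rw [hval]
      have h2 : D (fun i => t i • e i) = (∏ i, t i) • D e :=
        D.toMultilinearMap.map_smul_univ t e
      rw [h2, hDdef, Basis.det_self, smul_eq_mul, mul_one]
      rw [abs_of_pos (Finset.prod_pos fun i _ => htpos i)]
    set S : ℝ := sSup Sset with hS
    have hSpos : 0 < S := by
      have hmem : (∏ i, t i) ∈ Sset := ⟨_, hw0P, hDw0⟩
      exact lt_of_lt_of_le (Finset.prod_pos fun i _ => htpos i) (le_csSup hbdd hmem)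
    have hne : Sset.Nonempty := ⟨_, ⟨_, hw0P, rfl⟩⟩
    obtain ⟨a, ⟨w, hwP, rfl⟩, ha⟩ := exists_lt_of_lt_csSup hne (half_lt_self hSpos)
    replace ha : S / 2 < |D w| := ha
    choose v hv1 hv2 using hwP
    have hDw : D w ≠ 0 := by
      intro h
      rw [h, abs_zero] at ha
      linarith
    have hlin : LinearIndependent ℝ w := by
      by_contra h
      exact hDw (AlternatingMap.map_linearDependent D w h)
    set bw : Basis (Fin d) ℝ V :=
      basisOfLinearIndependentOfCardEqFinrank hlin (by simp [hd]) with hbwdef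
    have hbw : ⇑bw = w := coe_basisOfLinearIndependentOfCardEqFinrank _ _
    clear_value bw
    -- Cramer identity
    have hcramer : ∀ (i : Fin d) (u : V),
        D (Function.update w i u) = bw.repr u i * D w := by
      intro i
      set L1 : V →ₗ[ℝ] ℝ :=
        { toFun := fun u => D (Function.update w i u)
          map_add' := fun u1 u2 => D.map_update_add w i u1 u2
          map_smul' := fun r u => D.map_update_smul w i r u } with hL1
      set L2 : V →ₗ[ℝ] ℝ := (D w) • (bw.coord i) with hL2
      have hbwj : ∀ j, bw j = w j := fun j => congrFun hbw j
      have hLL : L1 = L2 := by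
        apply Basis.ext bw
        intro j
        rw [hL1, hL2]
        simp only [LinearMap.coe_mk, AddHom.coe_mk, LinearMap.smul_apply, smul_eq_mul,
          Basis.coord_apply, Basis.repr_self]
        rw [hbwj j]
        rcases eq_or_ne j i with rfl | hji
        · rw [Function.update_eq_self]
          simp [Finsupp.single_eq_same]
        · have h1 : D (Function.update w i (w j)) = 0 := by
            refine D.map_eq_zero_of_eq _ (?_ : _ = Function.update w i (w j) j) hji.symm
            rw [Function.update_self, Function.update_of_ne hji]
          rw [h1, Finsupp.single_eq_of_ne' hji]
          simp
      intro u
      have h3 := LinearMap.congr_fun hLL u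
      simp only [hL1, hL2, LinearMap.coe_mk, AddHom.coe_mk, LinearMap.smul_apply,
        smul_eq_mul, Basis.coord_apply] at h3
      rw [h3, mul_comm]
    -- coordinate bound
    have hcoord : ∀ f : B, ‖f‖ ≤ 1 → ∀ i : Fin d, |bw.repr (Ψ f) i| ≤ 2 := by
      intro f hf i
      have hmemP : Function.update w i (Ψ f) ∈ P := by
        intro j
        rcases eq_or_ne j i with rfl | hji
        · exact ⟨f, hf, (Function.update_self j _ w).symm⟩
        · exact ⟨v j, hv1 j, by rw [hv2 j, Function.update_of_ne hji]⟩
      have hle : |D (Function.update w i (Ψ f))| ≤ S := le_csSup hbdd ⟨_, hmemP, rfl⟩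
      have hcr := hcramer i (Ψ f)
      have habs : |bw.repr (Ψ f) i| * |D w| ≤ S := by
        rw [← abs_mul, ← hcr]; exact hle
      have h2 : S ≤ 2 * |D w| := by linarith
      have hDwpos : 0 < |D w| := abs_pos.mpr hDw
      nlinarith [abs_nonneg (bw.repr (Ψ f) i)]
    have hcoord' : ∀ f : B, ∀ i : Fin d, |bw.repr (Ψ f) i| ≤ 2 * ‖f‖ := by
      intro f i
      rcases eq_or_ne f 0 with rfl | hne0
      · simp
      · have hnorm : 0 < ‖f‖ := norm_pos_iff.mpr hne0
        have h1 : ‖(‖f‖⁻¹ • f)‖ ≤ 1 := by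
          rw [norm_smul, norm_inv, norm_norm, inv_mul_cancel₀ hnorm.ne']
        have h2 := hcoord (‖f‖⁻¹ • f) h1 i
        rw [map_smul, map_smul, Finsupp.smul_apply, smul_eq_mul, abs_mul,
          abs_inv, abs_norm] at h2
        calc |bw.repr (Ψ f) i| = ‖f‖ * (‖f‖⁻¹ * |bw.repr (Ψ f) i|) := by field_simp
        _ ≤ ‖f‖ * 2 := mul_le_mul_of_nonneg_left h2 hnorm.le
        _ = 2 * ‖f‖ := mul_comm _ _
    -- the projection
    set ci : Fin d → (B →L[ℝ] ℝ) := fun i =>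
      (LinearMap.toContinuousLinearMap ((bw.coord i : V →ₗ[ℝ] ℝ))).comp Ψ with hci
    have hciapp : ∀ (i : Fin d) (f : B), ci i f = bw.repr (Ψ f) i := by
      intro i f
      simp [hci, Basis.coord_apply]
    set π : B →L[ℝ] B := ∑ i, (ci i).smulRight (v i) with hπ
    have hπapp : ∀ f : B, π f = ∑ i, ci i f • v i := by
      intro f
      rw [hπ]
      simp [ContinuousLinearMap.sum_apply]
    refine ⟨π, ?_, ?_, ?_⟩
    · rw [hπ]
      have hsum : ∀ sf : Finset (Fin d),
          IsCompactOperator ⇑(∑ i ∈ sf, (ci i).smulRight (v i)) := by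
        intro sf
        induction sf using Finset.induction_on with
        | empty => simpa using (isCompactOperator_zero (M₁ := B) (M₂ := B))
        | @insert a sf' hni ih =>
            rw [Finset.sum_insert hni, ContinuousLinearMap.coe_add']
            exact (isCompactOperator_smulRight (ci a) (v a)).add ih
      exact hsum Finset.univ
    · intro f
      rw [hπapp, map_sum]
      have : ∀ i, Ψ (ci i f • v i) = bw.repr (Ψ f) i • w i := by
        intro i
        rw [map_smul, hv2 i, hciapp]
      rw [Finset.sum_congr rfl fun i _ => this i]
      have hsum : ∑ i, bw.repr (Ψ f) i • w i = Ψ f := by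
        conv_rhs => rw [← bw.sum_repr (Ψ f)]
        exact Finset.sum_congr rfl fun i _ => by rw [congrFun hbw i]
      rw [hsum]
    · intro f
      rw [hπapp]
      calc ‖∑ i, ci i f • v i‖ ≤ ∑ i, ‖ci i f • v i‖ := norm_sum_le _ _
      _ ≤ ∑ i : Fin d, 2 * ‖f‖ := by
          refine Finset.sum_le_sum fun i _ => ?_
          rw [norm_smul, Real.norm_eq_abs]
          have hmm : |ci i f| * ‖v i‖ ≤ (2 * ‖f‖) * 1 := by
            refine mul_le_mul ?_ (hv1 i) (norm_nonneg _) (by positivity)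
            rw [hciapp]; exact hcoord' f i
          linarith
      _ ≤ (2 * d) * ‖f‖ := le_of_eq (by
          rw [Finset.sum_const, Finset.card_univ, Fintype.card_fin, nsmul_eq_mul]
          ring)

lemma approx_by_compact (T : B →L[ℝ] B) (s : Finset (B →L[ℝ] ℝ)) (b : ℝ) (hb : 0 ≤ b)
    (H : ∀ f : B, (∀ g ∈ s, g f = 0) → ‖T f‖ ≤ b * ‖f‖) :
    ∃ K : B →L[ℝ] B, IsCompactOperator ⇑K ∧ ‖T - K‖ ≤ (1 + 2 * s.card) * b := by
  classical
  set Φ : B →L[ℝ] (s → ℝ) := ContinuousLinearMap.pi (fun g : s => (g : B →L[ℝ] ℝ)) with hΦdef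
  set W : Submodule ℝ (s → ℝ) := LinearMap.range (Φ : B →ₗ[ℝ] (s → ℝ)) with hW
  set ΦW : B →L[ℝ] W := Φ.codRestrict W (fun f => LinearMap.mem_range_self _ f) with hΦW
  have hsurj : ∀ u : W, ∃ x : B, ΦW x = u := by
    rintro ⟨u, hu⟩
    obtain ⟨x, hx⟩ := LinearMap.mem_range.mp hu
    exact ⟨x, Subtype.ext hx⟩
  obtain ⟨π, hπc, hπeq, hπb⟩ := exists_compact_projection ΦW hsurj
  have hdim : (finrank ℝ W : ℝ) ≤ (s.card : ℝ) := by
    have h1 : finrank ℝ W ≤ finrank ℝ (s → ℝ) := Submodule.finrank_le W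
    have h2 : finrank ℝ (∀ _ : ↥s, ℝ) = Fintype.card ↥s :=
      Module.finrank_fintype_fun_eq_card ℝ
    have h3 : Fintype.card ↥s = s.card := Fintype.card_coe s
    rw [h2, h3] at h1
    exact_mod_cast h1
  refine ⟨T.comp π, ?_, ?_⟩
  · rw [ContinuousLinearMap.coe_comp']
    exact hπc.continuous_comp T.continuous
  · have hnn : (0 : ℝ) ≤ (1 + 2 * s.card) * b := by positivity
    refine ContinuousLinearMap.opNorm_le_bound _ hnn ?_
    intro f
    have h0 : ∀ g ∈ s, g (f - π f) = 0 := by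
      intro g hg
      have h1 : ΦW (f - π f) = 0 := by rw [map_sub, hπeq, sub_self]
      have h2 : Φ (f - π f) = 0 := congrArg Subtype.val h1
      exact congrFun h2 ⟨g, hg⟩
    have h3 : ‖T (f - π f)‖ ≤ b * ‖f - π f‖ := H _ h0
    have h4 : ‖f - π f‖ ≤ (1 + 2 * finrank ℝ W) * ‖f‖ := by
      calc ‖f - π f‖ ≤ ‖f‖ + ‖π f‖ := norm_sub_le _ _
      _ ≤ ‖f‖ + 2 * finrank ℝ W * ‖f‖ := by linarith [hπb f]
      _ = (1 + 2 * finrank ℝ W) * ‖f‖ := by ring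
    have h5 : (T - T.comp π) f = T (f - π f) := by
      simp [map_sub]
    rw [h5]
    calc ‖T (f - π f)‖ ≤ b * ((1 + 2 * finrank ℝ W) * ‖f‖) :=
        le_trans h3 (mul_le_mul_of_nonneg_left h4 hb)
    _ ≤ (1 + 2 * s.card) * b * ‖f‖ := by
        have hfr : (0:ℝ) ≤ ((s.card:ℝ) - finrank ℝ W) := by linarith
        nlinarith [mul_nonneg (mul_nonneg hfr hb) (norm_nonneg f)]

lemma iterated_kernel_bound (T : B →L[ℝ] B) (s : Finset (B →L[ℝ] ℝ)) (b : ℝ) (hb : 0 ≤ b)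
    (H : ∀ f : B, (∀ g ∈ s, g f = 0) → ‖T f‖ ≤ b * ‖f‖) (k : ℕ) (f : B)
    (hf : ∀ j < k, ∀ g ∈ s, g ((T ^ j) f) = 0) :
    ‖(T ^ k) f‖ ≤ b ^ k * ‖f‖ := by
  induction k generalizing f with
  | zero => simp
  | succ k ih =>
      have h1 : ‖T f‖ ≤ b * ‖f‖ := H f (by
        intro g hg
        have := hf 0 (Nat.succ_pos k) g hg
        simpa using this)
      have h2 : ∀ j < k, ∀ g ∈ s, g ((T ^ j) (T f)) = 0 := by
        intro j hj g hg
        have := hf (j + 1) (Nat.succ_lt_succ hj) g hg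
        rw [pow_succ] at this
        simpa using this
      have h3 : ‖(T ^ k) (T f)‖ ≤ b ^ k * ‖T f‖ := ih (T f) h2
      have h4 : (T ^ (k + 1)) f = (T ^ k) (T f) := by
        rw [pow_succ]
        simp
      rw [h4]
      calc ‖(T ^ k) (T f)‖ ≤ b ^ k * ‖T f‖ := h3
      _ ≤ b ^ k * (b * ‖f‖) := mul_le_mul_of_nonneg_left h1 (pow_nonneg hb k)
      _ = b ^ (k + 1) * ‖f‖ := by ring

lemma essNorm_bddBelow (A : B →L[ℝ] B) :
    BddBelow {r : ℝ | ∃ K : B →L[ℝ] B, IsCompactOperator K ∧ r = ‖A - K‖} := by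
  refine ⟨0, ?_⟩
  rintro r ⟨K, -, rfl⟩
  exact norm_nonneg _

lemma essNorm_nonneg (A : B →L[ℝ] B) : 0 ≤ essNorm A := by
  apply Real.sInf_nonneg
  rintro r ⟨K, -, rfl⟩
  exact norm_nonneg _

lemma essNorm_le_of_compact (A K : B →L[ℝ] B) (h : IsCompactOperator ⇑K) :
    essNorm A ≤ ‖A - K‖ :=
  csInf_le (essNorm_bddBelow A) ⟨K, h, rfl⟩

end HennionAux

/- STATEMENT 15 (Hennion's theorem): if A is bounded on the Banach space B,
ι : B → B' is a compact embedding, and for every n ≥ 1 a Lasota–Yorke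
inequality ‖Aⁿ f‖ ≤ C₁ ρⁿ ‖f‖ + C(n) ‖ι f‖ holds, then the essential spectral
radius of A on B is at most ρ. -/
theorem hennion_essential_spectral_radius
    {B B' : Type*} [NormedAddCommGroup B] [NormedSpace ℝ B] [CompleteSpace B]
    [NormedAddCommGroup B'] [NormedSpace ℝ B'] [CompleteSpace B']
    (ι : B →L[ℝ] B') (hinj : Function.Injective ι) (hcomp : IsCompactOperator ι)
    (A : B →L[ℝ] B) (ρ : ℝ) (hρ : 0 < ρ) (C₁ : ℝ) (Cn : ℕ → ℝ)
    (hLY : ∀ n : ℕ, 1 ≤ n → ∀ f : B, ‖(A ^ n) f‖ ≤ C₁ * ρ ^ n * ‖f‖ + Cn n * ‖ι f‖) :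
    essSpectralRadius A ≤ ρ := by
  by_contra hcon
  rw [not_le] at hcon
  set E := essSpectralRadius A with hE
  set r : ℝ := (ρ + E) / 2 with hrdef
  have hρr : ρ < r := by rw [hrdef]; linarith
  have hrE : r < E := by rw [hrdef]; linarith
  have hr0 : 0 < r := lt_trans hρ hρr
  -- choice of n
  have hq1 : ρ / r < 1 := (div_lt_one hr0).mpr hρr
  have hq0 : 0 ≤ ρ / r := by positivity
  obtain ⟨n0, hn0⟩ := exists_pow_lt_of_lt_one (x := (|C₁| + 1)⁻¹) (by positivity) hq1
  set n : ℕ := n0 + 1 with hn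
  have hn1 : 1 ≤ n := Nat.le_add_left 1 n0
  have hng : (|C₁| + 1) * ρ ^ n < r ^ n := by
    have hmono : (ρ / r) ^ n ≤ (ρ / r) ^ n0 :=
      pow_le_pow_of_le_one hq0 hq1.le (Nat.le_succ n0)
    have h1 : (|C₁| + 1) * (ρ / r) ^ n < 1 := by
      calc (|C₁| + 1) * (ρ / r) ^ n ≤ (|C₁| + 1) * (ρ / r) ^ n0 :=
          mul_le_mul_of_nonneg_left hmono (by positivity)
      _ < (|C₁| + 1) * (|C₁| + 1)⁻¹ := by
          exact mul_lt_mul_of_pos_left hn0 (by positivity)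
      _ = 1 := mul_inv_cancel₀ (by positivity)
    have h2 : (ρ / r) ^ n = ρ ^ n / r ^ n := div_pow ρ r n
    rw [h2] at h1
    have h3 : (0:ℝ) < r ^ n := pow_pos hr0 n
    calc (|C₁| + 1) * ρ ^ n
        = ((|C₁| + 1) * (ρ ^ n / r ^ n)) * r ^ n := by field_simp
    _ < 1 * r ^ n := mul_lt_mul_of_pos_right h1 h3
    _ = r ^ n := one_mul _
  set b : ℝ := (|C₁| + 1) * ρ ^ n with hbdef
  have hb0 : 0 < b := by positivity
  -- the functionals controlling ι
  have hmax1 : (0:ℝ) < max (Cn n) 1 := lt_of_lt_of_le one_pos (le_max_right _ _)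
  set ε : ℝ := ρ ^ n / max (Cn n) 1 with hεdef
  have hεpos : 0 < ε := div_pos (pow_pos hρ n) hmax1
  obtain ⟨s, hs⟩ := exists_finset_functionals ι hcomp hεpos
  have Hs : ∀ f : B, (∀ g ∈ s, g f = 0) → ‖(A ^ n) f‖ ≤ b * ‖f‖ := by
    intro f hf
    have h1 := hLY n hn1 f
    have h2 : Cn n * ‖ι f‖ ≤ ρ ^ n * ‖f‖ := by
      have h3 : ‖ι f‖ ≤ ε * ‖f‖ := hs f hf
      calc Cn n * ‖ι f‖ ≤ max (Cn n) 1 * ‖ι f‖ :=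
          mul_le_mul_of_nonneg_right (le_max_left _ _) (norm_nonneg _)
      _ ≤ max (Cn n) 1 * (ε * ‖f‖) := mul_le_mul_of_nonneg_left h3 hmax1.le
      _ = ρ ^ n * ‖f‖ := by rw [hεdef]; field_simp
    have h5 : C₁ * ρ ^ n * ‖f‖ ≤ |C₁| * ρ ^ n * ‖f‖ := by
      apply mul_le_mul_of_nonneg_right _ (norm_nonneg f)
      exact mul_le_mul_of_nonneg_right (le_abs_self C₁) (pow_nonneg hρ.le n)
    calc ‖(A ^ n) f‖ ≤ C₁ * ρ ^ n * ‖f‖ + Cn n * ‖ι f‖ := h1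
    _ ≤ |C₁| * ρ ^ n * ‖f‖ + ρ ^ n * ‖f‖ := by linarith
    _ = b * ‖f‖ := by rw [hbdef]; ring
  set m : ℕ := s.card with hm
  set q : ℝ := b / r ^ n with hqdef
  have hq01 : 0 < q := div_pos hb0 (pow_pos hr0 n)
  have hqlt : q < 1 := (div_lt_one (pow_pos hr0 n)).mpr hng
  -- choice of k
  have hsummable : Summable (fun k : ℕ => (k:ℝ) ^ 1 * q ^ k) :=
    summable_pow_mul_geometric_of_norm_lt_one 1
      (by rw [Real.norm_eq_abs, abs_of_pos hq01]; exact hqlt)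
  have hlin : Tendsto (fun k : ℕ => (k:ℝ) * q ^ k) atTop (nhds 0) := by
    have := hsummable.tendsto_atTop_zero
    simpa using this
  have hgeo : Tendsto (fun k : ℕ => q ^ k) atTop (nhds 0) :=
    tendsto_pow_atTop_nhds_zero_of_lt_one hq01.le hqlt
  have hlim : Tendsto (fun k : ℕ => (1 + 2 * ((k:ℝ) * m)) * q ^ k) atTop (nhds 0) := by
    have hcomb : Tendsto (fun k : ℕ => q ^ k + 2 * m * ((k:ℝ) * q ^ k)) atTop (nhds (0 + 2 * m * 0)) :=
      hgeo.add ((hlin.const_mul (2 * (m:ℝ))))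
    rw [mul_zero, add_zero] at hcomb
    apply hcomb.congr
    intro k
    ring
  have hev : ∀ᶠ k : ℕ in atTop, (1 + 2 * ((k:ℝ) * m)) * q ^ k < 1 := by
    have := hlim.eventually (eventually_lt_nhds one_pos)
    exact this
  obtain ⟨k, hkb, hk1⟩ := (hev.and (eventually_ge_atTop 1)).exists
  have hk0 : 0 < k := hk1
  -- the iterated functionals
  classical
  set sk : Finset (B →L[ℝ] ℝ) :=
    (Finset.range k).biUnion (fun j => s.image (fun g => g.comp ((A ^ n) ^ j))) with hskdef
  have hskcard : sk.card ≤ k * m := by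
    refine le_trans (Finset.card_biUnion_le) ?_
    calc ∑ j ∈ Finset.range k, (s.image (fun g => g.comp ((A ^ n) ^ j))).card
        ≤ ∑ _j ∈ Finset.range k, s.card :=
          Finset.sum_le_sum fun j _ => Finset.card_image_le
    _ = k * m := by simp [hm]
  have Hk : ∀ f : B, (∀ h ∈ sk, h f = 0) → ‖((A ^ n) ^ k) f‖ ≤ b ^ k * ‖f‖ := by
    intro f hf
    refine iterated_kernel_bound (A ^ n) s b hb0.le Hs k f ?_
    intro j hj g hg
    have hmem : g.comp ((A ^ n) ^ j) ∈ sk :=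
      Finset.mem_biUnion.mpr ⟨j, Finset.mem_range.mpr hj, Finset.mem_image_of_mem _ hg⟩
    exact hf _ hmem
  obtain ⟨K, hKc, hKle⟩ := approx_by_compact ((A ^ n) ^ k) sk (b ^ k) (pow_nonneg hb0.le k) Hk
  -- essential norm bound
  have h6 : essNorm (A ^ (n * k)) ≤ r ^ (n * k) := by
    rw [pow_mul, pow_mul]
    calc essNorm ((A ^ n) ^ k) ≤ ‖(A ^ n) ^ k - K‖ := essNorm_le_of_compact _ _ hKc
    _ ≤ (1 + 2 * sk.card) * b ^ k := hKle
    _ ≤ (1 + 2 * ((k:ℝ) * m)) * b ^ k := by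
        have hc : (sk.card : ℝ) ≤ (k:ℝ) * m := by exact_mod_cast hskcard
        nlinarith [pow_nonneg hb0.le k]
    _ = ((1 + 2 * ((k:ℝ) * m)) * q ^ k) * (r ^ n) ^ k := by
        rw [hqdef, div_pow, mul_assoc,
          div_mul_cancel₀ _ (pow_ne_zero k (pow_pos hr0 n).ne')]
    _ ≤ 1 * (r ^ n) ^ k :=
        mul_le_mul_of_nonneg_right hkb.le (pow_nonneg (pow_nonneg hr0.le n) k)
    _ = (r ^ n) ^ k := one_mul _
  have hnk : 0 < n * k := Nat.mul_pos (Nat.lt_of_lt_of_le Nat.zero_lt_one hn1) hk0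
  have hEle : E ≤ essNorm (A ^ (n * k)) ^ (1 / ((n * k : ℕ) : ℝ)) := by
    apply csInf_le
    · refine ⟨0, ?_⟩
      rintro z ⟨n', hn', rfl⟩
      exact Real.rpow_nonneg (essNorm_nonneg _) _
    · exact ⟨n * k, hnk, rfl⟩
  have helt : essNorm (A ^ (n * k)) ^ (1 / ((n * k : ℕ) : ℝ)) ≤ r := by
    have h8 : (0:ℝ) ≤ essNorm (A ^ (n * k)) := essNorm_nonneg _
    have hnkR : ((n * k : ℕ) : ℝ) ≠ 0 := Nat.cast_ne_zero.mpr hnk.ne'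
    have h9 : essNorm (A ^ (n * k)) ^ (1 / ((n * k : ℕ) : ℝ))
        ≤ (r ^ (n * k)) ^ (1 / ((n * k : ℕ) : ℝ)) :=
      Real.rpow_le_rpow h8 h6 (by positivity)
    have h10 : (r ^ (n * k)) ^ (1 / ((n * k : ℕ) : ℝ)) = r := by
      rw [← Real.rpow_natCast r (n * k), ← Real.rpow_mul hr0.le, mul_one_div,
        div_self hnkR, Real.rpow_one]
    rw [h10] at h9
    exact h9
  linarith
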